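/- For all real t ≥ 0, φ''(t)·φ(t) - φ'(t)² ≥ 0, where φ(t) = 1 - e^t + e^{2t} + e^{3t}. -/

import Mathlib

theorem stmt_4 (φ : ℝ → ℝ)
    (hφ : φ = fun t : ℝ => 1 - Real.exp t + Real.exp (2*t) + Real.exp (3*t))
    (t : ℝ) (ht : 0 ≤ t) :
    0 ≤ deriv (deriv φ) t * φ t - (deriv φ t)^2 := by
  have ec : ∀ (c s : ℝ), HasDerivAt (fun t : ℝ => Real.exp (c*t)) (c * Real.exp (c*s)) s := by
    intro c s
    have := (Real.hasDerivAt_exp (c*s)).comp s ((hasDerivAt_id s).const_mul c)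
    exact this.congr_deriv (by ring)
  have hd1 : deriv φ = fun s : ℝ =>
      -Real.exp s + 2 * Real.exp (2*s) + 3 * Real.exp (3*s) := by
    funext s
    rw [hφ]
    have h : HasDerivAt (fun t : ℝ => 1 - Real.exp t + Real.exp (2*t) + Real.exp (3*t))
        (-Real.exp s + 2 * Real.exp (2*s) + 3 * Real.exp (3*s)) s := by
      have := (((hasDerivAt_const s (1:ℝ)).sub (Real.hasDerivAt_exp s)).add (ec 2 s)).add (ec 3 s)
      exact this.congr_deriv (by ring)
    exact h.deriv
  have hd2 : deriv (deriv φ) t =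
      -Real.exp t + 4 * Real.exp (2*t) + 9 * Real.exp (3*t) := by
    rw [hd1]
    have h : HasDerivAt (fun s : ℝ => -Real.exp s + 2 * Real.exp (2*s) + 3 * Real.exp (3*s))
        (-Real.exp t + 4 * Real.exp (2*t) + 9 * Real.exp (3*t)) t := by
      have := (((Real.hasDerivAt_exp t).neg).add ((ec 2 t).const_mul 2)).add ((ec 3 t).const_mul 3)
      exact this.congr_deriv (by ring)
    exact h.deriv
  rw [hd2, hd1, hφ]
  simp only
  have h2 : Real.exp (2*t) = Real.exp t ^ 2 := by
    rw [← Real.exp_nat_mul]; norm_num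
  have h3 : Real.exp (3*t) = Real.exp t ^ 3 := by
    rw [← Real.exp_nat_mul]; norm_num
  rw [h2, h3]
  have hx : 1 ≤ Real.exp t := Real.one_le_exp ht
  nlinarith [sq_nonneg (Real.exp t - 2), sq_nonneg (Real.exp t),
    sq_nonneg (Real.exp t ^ 2 - 2*Real.exp t)]
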